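/- Let X be a Banach space, A a finitely branching tree, (y_a)_{a∈A} and (y'_a)_{a∈A} families in X, and (ε_n)_{n≥0} positive reals with Σ_n ε_n < ∞ and ‖y_a − y'_a‖ < ε_{|a|} for all a. Define r_a = Σ_{γ ≤ a} (y_γ − y'_γ) (sum over all predecessors γ of a, including a itself). Then the set {r_a : a ∈ A} is totally bounded, and hence its closed convex hull is norm compact. -/

import Mathlib

open Filter Topology Pointwise

/-- A finitely branching tree: a downward-closed set of finite sequences of naturals,
with finitely many elements at each length. -/
def IsFinBranchTree (A : Set (List ℕ)) : Prop :=
  [] ∈ A ∧ (∀ a ∈ A, ∀ n : ℕ, a.take n ∈ A) ∧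
    ∀ n : ℕ, {a ∈ A | a.length = n}.Finite

/-- The immediate successors of `a` in `A`. -/
def Succs (A : Set (List ℕ)) (a : List ℕ) : Set (List ℕ) :=
  {b ∈ A | a <+: b ∧ b.length = a.length + 1}

/-- The elements of `A` at level `n`. -/
def Level (A : Set (List ℕ)) (n : ℕ) : Set (List ℕ) :=
  {a ∈ A | a.length = n}

/-- `(x_a)_{a ∈ A}` is a `δ`-approximate bush with weights `lam` and errors `ε`. -/
def IsApproxBush {X : Type*} [NormedAddCommGroup X] [NormedSpace ℝ X]
    (A : Set (List ℕ)) (x : List ℕ → X) (lam : List ℕ → ℝ)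
    (δ : ℝ) (ε : ℕ → ℝ) : Prop :=
  IsFinBranchTree A ∧ (∃ M : ℝ, ∀ a ∈ A, ‖x a‖ ≤ M) ∧
    ∀ a ∈ A,
      (∀ b ∈ Succs A a, δ < ‖x a - x b‖) ∧
      (∀ b ∈ Succs A a, 0 ≤ lam b) ∧
      (∑ᶠ b ∈ Succs A a, lam b) = 1 ∧
      ‖x a - ∑ᶠ b ∈ Succs A a, lam b • x b‖ < ε a.length

/-- The weight `λ_b^{(a)}` obtained by multiplying the bush weights along the
branch from `a` down to `b`. -/
noncomputable def branchWeight (lam : List ℕ → ℝ) (a b : List ℕ) : ℝ :=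
  ∏ i ∈ Finset.Icc (a.length + 1) b.length, lam (b.take i)

/-- The iterated average `x_a^m = ∑_{|b| = m, b ≥ a} λ_b^{(a)} x_b`. -/
noncomputable def iterAvg {X : Type*} [NormedAddCommGroup X] [NormedSpace ℝ X]
    (A : Set (List ℕ)) (x : List ℕ → X) (lam : List ℕ → ℝ)
    (a : List ℕ) (m : ℕ) : X :=
  ∑ᶠ b ∈ {b ∈ Level A m | a <+: b}, branchWeight lam a b • x b

/-- `x` is the sum of the series `∑_{k=0}^∞ ∑_{|a|=k} f a`, summed by levels. -/
def HasLevelSum {X : Type*} [NormedAddCommGroup X] [NormedSpace ℝ X]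
    (A : Set (List ℕ)) (f : List ℕ → X) (x : X) : Prop :=
  Tendsto (fun n => ∑ k ∈ Finset.range n, ∑ᶠ a ∈ Level A k, f a) atTop (𝓝 x)

/-- The weak topology of a topological vector space. -/
noncomputable def weakTop (X : Type*) [AddCommGroup X] [Module ℝ X]
    [TopologicalSpace X] : TopologicalSpace X :=
  TopologicalSpace.induced (toWeakSpace ℝ X) inferInstance

/-- The relative weak and relative norm topologies on `S` coincide. -/
def TopsCoincide {X : Type*} [NormedAddCommGroup X] [NormedSpace ℝ X]
    (S : Set X) : Prop :=
  TopologicalSpace.induced ((↑) : S → X) (weakTop X) =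
    TopologicalSpace.induced ((↑) : S → X) inferInstance

/-- A normalized conditionally determined family on the tree `A`. -/
def CondDetermined (A : Set (List ℕ)) (lam : List ℕ → ℝ) : Prop :=
  lam [] = 1 ∧ (∀ a ∈ A, 0 ≤ lam a) ∧
    ∀ a ∈ A, lam a = ∑ᶠ b ∈ Succs A a, lam b

/-- A Schauder decomposition of `X`, given by the component projections `P n`,
with decomposition constant `C`. -/
def IsSchauderDecomp {X : Type*} [NormedAddCommGroup X] [NormedSpace ℝ X]
    (P : ℕ → X →L[ℝ] X) (C : ℝ) : Prop :=
  (∀ i j, i ≠ j → ∀ v, P i (P j v) = 0) ∧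
  (∀ i, ∀ v, P i (P i v) = P i v) ∧
  (∀ v : X, Tendsto (fun n => ∑ i ∈ Finset.range n, P i v) atTop (𝓝 v)) ∧
  (∀ n, ∀ v : X, ‖∑ i ∈ Finset.range n, P i v‖ ≤ C * ‖v‖)

/-- Support of a vector with respect to a decomposition. -/
def decompSupp {X : Type*} [NormedAddCommGroup X] [NormedSpace ℝ X]
    (P : ℕ → X →L[ℝ] X) (v : X) : Set ℕ :=
  {n | P n v ≠ 0}

/-- if `‖y_a − y'_a‖ < ε_{|a|}` with `∑ ε_n < ∞`, then the set of
partial sums along branches `r_a = ∑_{γ ≤ a} (y_γ − y'_γ)` is totally bounded,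
and its closed convex hull is norm compact. -/
theorem stmt4 {X : Type*} [NormedAddCommGroup X] [NormedSpace ℝ X] [CompleteSpace X]
    (A : Set (List ℕ)) (hA : IsFinBranchTree A)
    (y y' : List ℕ → X) (ε : ℕ → ℝ) (hεpos : ∀ n, 0 < ε n) (hsum : Summable ε)
    (hclose : ∀ a ∈ A, ‖y a - y' a‖ < ε a.length) :
    TotallyBounded
      {r : X | ∃ a ∈ A,
        r = ∑ i ∈ Finset.range (a.length + 1), (y (a.take i) - y' (a.take i))} ∧
    IsCompact (closure (convexHull ℝ
      {r : X | ∃ a ∈ A,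
        r = ∑ i ∈ Finset.range (a.length + 1), (y (a.take i) - y' (a.take i))})) := by
  have hA' : ([] ∈ A ∧ (∀ a ∈ A, ∀ n : ℕ, a.take n ∈ A) ∧
      ∀ n : ℕ, {a ∈ A | a.length = n}.Finite) := hA
  have hTB : TotallyBounded
      {r : X | ∃ a ∈ A,
        r = ∑ i ∈ Finset.range (a.length + 1), (y (a.take i) - y' (a.take i))} := by
      set r : List ℕ → X := fun a => ∑ i ∈ Finset.range (a.length + 1), (y (a.take i) - y' (a.take i))
        with hr
      rw [Metric.totallyBounded_iff]
      intro δ hδ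
      obtain ⟨M, hM⟩ : ∃ M, ∀ m ≥ M, (∑' k, ε (k + m)) < δ := by
        have h := (tendsto_sum_nat_add ε).eventually (gt_mem_nhds hδ)
        exact h.exists_forall_of_atTop
      have hfin : {b ∈ A | b.length ≤ M}.Finite := by
        apply Set.Finite.subset (Set.Finite.biUnion (Set.finite_Iic M)
          (fun k _ => hA'.2.2 k))
        rintro b ⟨hbA, hbl⟩
        exact Set.mem_biUnion hbl ⟨hbA, rfl⟩
      refine ⟨r '' {b ∈ A | b.length ≤ M}, hfin.image r, ?_⟩
      rintro x ⟨a, ha, rfl⟩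
      by_cases hlen : a.length ≤ M
      · exact Set.mem_biUnion ⟨a, ⟨ha, hlen⟩, rfl⟩ (Metric.mem_ball_self hδ)
      push_neg at hlen
      have hMle : M ≤ a.length := hlen.le
      set b := a.take M with hb
      have hbA : b ∈ A := hA'.2.1 a ha M
      have hbl : b.length = M := by simp [hb, Nat.min_eq_left hMle]
      refine Set.mem_biUnion ⟨b, ⟨hbA, hbl.le⟩, rfl⟩ ?_
      have hrb : r b = ∑ i ∈ Finset.range (M + 1), (y (a.take i) - y' (a.take i)) := by
        rw [hr]
        simp only [hbl]
        refine Finset.sum_congr rfl fun i hi => ?_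
        have : i ≤ M := Nat.lt_succ_iff.mp (Finset.mem_range.mp hi)
        rw [hb, List.take_take, Nat.min_eq_left this]
      have hdiff : r a - r b = ∑ i ∈ Finset.Ico (M + 1) (a.length + 1),
          (y (a.take i) - y' (a.take i)) := by
        rw [hrb, hr]
        have := Finset.sum_Ico_consecutive (fun i => y (a.take i) - y' (a.take i))
          (Nat.zero_le (M+1)) (Nat.succ_le_succ hMle)
        simp only [Finset.range_eq_Ico]
        linear_combination (norm := abel) - this
      have hnorm : ‖r a - r b‖ < δ := by
        rw [hdiff]
        calc ‖∑ i ∈ Finset.Ico (M + 1) (a.length + 1), (y (a.take i) - y' (a.take i))‖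
            ≤ ∑ i ∈ Finset.Ico (M + 1) (a.length + 1), ε i := by
              refine norm_sum_le_of_le _ fun i hi => ?_
              obtain ⟨h1, h2⟩ := Finset.mem_Ico.mp hi
              have hil : i ≤ a.length := Nat.lt_succ_iff.mp h2
              have := hclose (a.take i) (hA'.2.1 a ha i)
              rw [List.length_take, Nat.min_eq_left hil] at this
              exact this.le
          _ = ∑ k ∈ Finset.range (a.length + 1 - (M+1)), ε (M + 1 + k) :=
              Finset.sum_Ico_eq_sum_range _ _ _
          _ = ∑ k ∈ Finset.range (a.length + 1 - (M+1)), ε (k + (M + 1)) := by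
              refine Finset.sum_congr rfl fun k _ => by rw [Nat.add_comm]
          _ ≤ ∑' k, ε (k + (M + 1)) := Summable.sum_le_tsum _ (fun k _ => (hεpos _).le)
              ((summable_nat_add_iff (M+1)).mpr hsum)
          _ < δ := hM (M + 1) (Nat.le_succ M)
      rw [Metric.mem_ball, dist_eq_norm]
      exact hnorm
  refine ⟨hTB, ?_⟩
  exact TotallyBounded.isCompact_of_isClosed
    ((totallyBounded_convexHull.mpr hTB).closure) isClosed_closure
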